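/- arXiv:2402.17956 — 2 statements merged into one kernel-verified Lean document; each statement's English description precedes it below -/
import Mathlib

section
/- Let K be a group with subgroups Ū and T such that every k ∈ K factors as k = n̄ t with n̄ ∈ Ū, t ∈ T (i.e. K = Ū T), let K act on a set X, and let ε : W → X be a T-equivariant injection from a T-set W such that Ū acts freely on Ū·ε(W) and (Ū·ε(w)) ∩ ε(W) = {ε(w)} for all w. Then the map K ×_T W → K·ε(W), [k,w] ↦ k·ε(w) is a bijection. -/
/-- The defining relation of the induced bundle `K ×_T W`:
`(kt, w) ~ (k, t • w)`. -/
def inducedRelT (K : Type*) [Group K] (T : Subgroup K) (W : Type*)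
    [MulAction T W] : (K × W) → (K × W) → Prop :=
  fun a b => ∃ t : T, a.1 = b.1 * (t : K) ∧ b.2 = t • a.2

/-- If `K = Ū T`, `ε : W → X` is a `T`-equivariant injection, `Ū` acts freely
on `Ū · ε(W)` and `(Ū · ε w) ∩ ε(W) = {ε w}`, then `[k, w] ↦ k • ε w` is a
bijection from `K ×_T W` onto `K · ε(W)`. -/
theorem stmt18 (K : Type*) [Group K] (Ubar T : Subgroup K)
    (hfact : ∀ k : K, ∃ nbar t : K, nbar ∈ Ubar ∧ t ∈ T ∧ k = nbar * t)
    (X : Type*) [MulAction K X] (W : Type*) [MulAction T W]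
    (ε : W → X) (hinj : Function.Injective ε)
    (hequiv : ∀ (t : T) (w : W), ε (t • w) = (t : K) • ε w)
    (hfree : ∀ nbar ∈ Ubar, ∀ y : X,
      (∃ nbar' ∈ Ubar, ∃ w : W, y = nbar' • ε w) → nbar • y = y → nbar = 1)
    (hcap : ∀ nbar ∈ Ubar, ∀ w w' : W, nbar • ε w = ε w' → w' = w) :
    (∀ a b : K × W,
      a.1 • ε a.2 = b.1 • ε b.2 ↔
        ∃ t : T, a.1 = b.1 * (t : K) ∧ b.2 = t • a.2) ∧
    Nonempty (Quot (inducedRelT K T W) ≃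
      Set.range fun kw : K × W => kw.1 • ε kw.2) := by
  have key : ∀ a b : K × W,
      a.1 • ε a.2 = b.1 • ε b.2 ↔
        ∃ t : T, a.1 = b.1 * (t : K) ∧ b.2 = t • a.2 := by
    intro a b
    constructor
    · intro h
      obtain ⟨nbar, t, hn, ht, hkt⟩ := hfact (b.1⁻¹ * a.1)
      have h1 : (b.1⁻¹ * a.1) • ε a.2 = ε b.2 := by
        rw [mul_smul, h, inv_smul_smul]
      rw [hkt, mul_smul] at h1
      have h2 : nbar • ε ((⟨t, ht⟩ : T) • a.2) = ε b.2 := by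
        rw [hequiv]; exact h1
      have hb2 : b.2 = (⟨t, ht⟩ : T) • a.2 := hcap nbar hn _ _ h2
      have h3 : nbar • ε b.2 = ε b.2 := by rw [← hb2] at h2; exact h2
      have hn1 : nbar = 1 := hfree nbar hn (ε b.2)
        ⟨1, one_mem _, b.2, (one_smul K _).symm⟩ h3
      refine ⟨⟨t, ht⟩, ?_, hb2⟩
      have : b.1⁻¹ * a.1 = t := by rw [hkt, hn1, one_mul]
      show a.1 = b.1 * t
      rw [← this, mul_inv_cancel_left]
    · rintro ⟨t, ha, hb⟩
      rw [ha, hb, hequiv, mul_smul]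
  refine ⟨key, ⟨Equiv.ofBijective
    (Quot.lift (fun kw : K × W =>
      (⟨kw.1 • ε kw.2, kw, rfl⟩ : Set.range fun kw : K × W => kw.1 • ε kw.2))
      (fun a b hab => Subtype.ext ((key a b).2 hab))) ⟨?_, ?_⟩⟩⟩
  · intro x y
    induction x using Quot.ind with | _ a =>
    induction y using Quot.ind with | _ b =>
    intro h
    exact Quot.sound ((key a b).1 (congrArg Subtype.val h))
  · rintro ⟨_, kw, rfl⟩
    exact ⟨Quot.mk _ kw, rfl⟩
end

section
/- Let λ ∈ gl(n,ℂ) be integral diagonal with adjacent gaps, x ∈ g(-1), and ε(x) = exp(x_1)···exp(x_ℓ)·p the translated parabolic. Then the stabilizer of ε(x) in L (block-diagonal matrices) equals the stabilizer of x in L, i.e. Z_L(x) = Z_L(ε(x)). -/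
open Matrix

namespace Stmt19Aux

variable {n : ℕ} {d : Fin n → ℤ}

abbrev Mat (n : ℕ) := Matrix (Fin n) (Fin n) ℂ

/-- `M` agrees with `1` on positions of degree `≥ 0` and with `s` on degree `-1` positions. -/
def UP (d : Fin n → ℤ) (s M : Mat n) : Prop :=
  (∀ i j, 0 ≤ d i - d j → M i j = if i = j then 1 else 0) ∧
  (∀ i j, d i - d j = -1 → M i j = s i j)

lemma up_one : UP d 0 (1 : Mat n) := by
  constructor
  · intro i j _; simp [Matrix.one_apply]
  · intro i j h
    have hne : i ≠ j := by intro e; subst e; omega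
    simp [Matrix.one_apply, hne]

lemma up_of {s : Mat n} (hs : ∀ i j, s i j ≠ 0 → d i - d j = -1) :
    UP d s (1 + s) := by
  constructor
  · intro i j h
    have h0 : s i j = 0 := by by_contra hc; have := hs i j hc; omega
    simp [Matrix.one_apply, h0]
  · intro i j h
    have hne : i ≠ j := by intro e; subst e; omega
    simp [Matrix.one_apply, hne]

lemma up_mul {s t M N : Mat n} (hM : UP d s M) (hN : UP d t N) :
    UP d (s + t) (M * N) := by
  constructor
  · intro i j hij
    rw [Matrix.mul_apply]
    have key : ∀ k, M i k * N k j = if k = i then (if i = j then (1:ℂ) else 0) else 0 := by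
      intro k
      rcases le_or_gt 0 (d i - d k) with hk | hk
      · rw [hM.1 i k hk]
        by_cases hki : k = i
        · subst hki; rw [hN.1 k j (by omega)]; simp
        · simp [Ne.symm hki, hki]
      · have hNkj : N k j = 0 := by
          rw [hN.1 k j (by omega)]
          have : k ≠ j := by intro e; subst e; omega
          simp [this]
        have hne : k ≠ i := by intro e; subst e; omega
        simp [hNkj, hne]
    rw [Finset.sum_congr rfl fun k _ => key k]
    simp
  · intro i j hij
    rw [Matrix.mul_apply]
    have key : ∀ k, M i k * N k j =
        (if k = i then t i j else 0) + (if k = j then s i j else 0) := by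
      intro k
      rcases lt_trichotomy (d i - d k) (-1) with hk | hk | hk
      · have hNkj : N k j = 0 := by
          rw [hN.1 k j (by omega)]
          have : k ≠ j := by intro e; subst e; omega
          simp [this]
        have h2 : k ≠ i := by intro e; subst e; omega
        have h3 : k ≠ j := by intro e; subst e; omega
        simp [hNkj, h2, h3]
      · have hMik : M i k = s i k := hM.2 i k hk
        have hNkj : N k j = if k = j then (1:ℂ) else 0 := hN.1 k j (by omega)
        have h2 : k ≠ i := by intro e; subst e; omega
        by_cases h3 : k = j
        · subst h3; simp [hMik, hNkj, h2]
        · simp [hMik, hNkj, h2, h3]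
      · have hMik : M i k = if i = k then (1:ℂ) else 0 := hM.1 i k (by omega)
        have h3 : k ≠ j := by intro e; subst e; omega
        by_cases h2 : k = i
        · subst h2; simp [hMik, hN.2 k j hij, h3]
        · simp [hMik, Ne.symm h2, h2, h3]
    rw [Finset.sum_congr rfl fun k _ => key k, Finset.sum_add_distrib]
    simp [add_comm]


lemma up_prod {x : ℕ → Mat n} (hx : ∀ j i i', x j i i' ≠ 0 → d i - d i' = -1) (m : ℕ) :
    UP d (∑ j ∈ Finset.range m, x j)
      (((List.range m).map fun j => (1 : Mat n) + x j).prod) := by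
  induction m with
  | zero => simpa using (up_one (d := d))
  | succ m ih =>
      rw [List.range_succ, List.map_append, List.prod_append, Finset.sum_range_succ]
      simpa using up_mul ih (up_of (hx m))

lemma up_prod_rev {x : ℕ → Mat n} (hx : ∀ j i i', x j i i' ≠ 0 → d i - d i' = -1) (m : ℕ) :
    UP d (-(∑ j ∈ Finset.range m, x j))
      (((List.range m).reverse.map fun j => (1 : Mat n) - x j).prod) := by
  induction m with
  | zero => simpa using (up_one (d := d))
  | succ m ih =>
      rw [List.range_succ, List.reverse_append, Finset.sum_range_succ]
      simp only [List.reverse_cons, List.reverse_nil, List.nil_append, List.singleton_append,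
        List.map_cons, List.prod_cons]
      have h1 : UP d (-(x m)) (1 - x m) := by
        have := up_of (s := -(x m)) (d := d) (fun i j h => hx m i j (by simpa using h))
        simpa [sub_eq_add_neg] using this
      have h2 := up_mul h1 ih
      have h3 : -(x m) + -(∑ j ∈ Finset.range m, x j)
          = -((∑ j ∈ Finset.range m, x j) + x m) := by abel
      rwa [h3] at h2

lemma prod_mul_prod_rev {x : ℕ → Mat n} (hsq : ∀ j, x j * x j = 0) (m : ℕ) :
    (((List.range m).map fun j => (1 : Mat n) + x j).prod) *
      (((List.range m).reverse.map fun j => (1 : Mat n) - x j).prod) = 1 := by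
  induction m with
  | zero => simp
  | succ m ih =>
      rw [List.range_succ, List.reverse_append, List.map_append, List.prod_append]
      simp only [List.reverse_cons, List.reverse_nil, List.nil_append, List.singleton_append,
        List.map_cons, List.prod_cons, List.map_nil, List.prod_nil, mul_one]
      have hmid : ((1 : Mat n) + x m) * (1 - x m) = 1 := by
        have h0 : ((1 : Mat n) + x m) * (1 - x m) = 1 - x m * x m := by noncomm_ring
        rw [h0, hsq m, sub_zero]
      calc ((List.range m).map fun j => (1 : Mat n) + x j).prod * (1 + x m) *
            ((1 - x m) * ((List.range m).reverse.map fun j => (1 : Mat n) - x j).prod)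
          = ((List.range m).map fun j => (1 : Mat n) + x j).prod * (((1 + x m) * (1 - x m)) *
            ((List.range m).reverse.map fun j => (1 : Mat n) - x j).prod) := by noncomm_ring
        _ = 1 := by rw [hmid, one_mul, ih]


variable {X u u' M : Mat n}

lemma bd_mul0 (hM : ∀ i j, d i ≠ d j → M i j = 0) (hu : UP d X u)
    {k j : Fin n} (h : 0 ≤ d k - d j) : (M * u) k j = M k j := by
  rw [Matrix.mul_apply]
  have key : ∀ m, M k m * u m j = if m = j then M k j else 0 := by
    intro m
    by_cases hkm : d k = d m
    · rw [hu.1 m j (by omega)]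
      by_cases hmj : m = j
      · subst hmj; simp
      · simp [hmj]
    · rw [hM k m hkm]
      by_cases hmj : m = j
      · subst hmj; simp [hM k m hkm]
      · simp [hmj]
  rw [Finset.sum_congr rfl fun m _ => key m]
  simp

lemma bd_mul1 (hM : ∀ i j, d i ≠ d j → M i j = 0) (hu : UP d X u)
    {k j : Fin n} (h : d k - d j = -1) : (M * u) k j = (M * X) k j := by
  rw [Matrix.mul_apply, Matrix.mul_apply]
  refine Finset.sum_congr rfl fun m _ => ?_
  by_cases hkm : d k = d m
  · rw [hu.2 m j (by omega)]
  · rw [hM k m hkm, zero_mul, zero_mul]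

lemma sandwich0 (hM : ∀ i j, d i ≠ d j → M i j = 0) (hu : UP d X u)
    (hu'1 : ∀ i j, 0 ≤ d i - d j → u' i j = if i = j then 1 else 0)
    {i j : Fin n} (h : 0 ≤ d i - d j) : (u' * (M * u)) i j = M i j := by
  rw [Matrix.mul_apply]
  have key : ∀ k, u' i k * (M * u) k j = if k = i then M i j else 0 := by
    intro k
    rcases le_or_gt 0 (d i - d k) with hk | hk
    · rw [hu'1 i k hk]
      by_cases hki : k = i
      · subst hki; rw [bd_mul0 hM hu (by omega)]; simp
      · simp [Ne.symm hki, hki]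
    · have h1 : (M * u) k j = 0 := by
        rw [bd_mul0 hM hu (by omega)]
        exact hM k j (by omega)
      have hne : k ≠ i := by intro e; subst e; omega
      simp [h1, hne]
  rw [Finset.sum_congr rfl fun k _ => key k]
  simp

lemma sandwich1 (hM : ∀ i j, d i ≠ d j → M i j = 0) (hu : UP d X u) (hu' : UP d (-X) u')
    (hX : ∀ i j, X i j ≠ 0 → d i - d j = -1)
    {i j : Fin n} (h : d i - d j = -1) :
    (u' * (M * u)) i j = (M * X) i j - (X * M) i j := by
  rw [Matrix.mul_apply]
  have key : ∀ k, u' i k * (M * u) k j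
      = (if k = i then (M * X) i j else 0) - X i k * M k j := by
    intro k
    rcases lt_trichotomy (d i - d k) (-1) with hk | hk | hk
    · have h1 : (M * u) k j = 0 := by
        rw [bd_mul0 hM hu (by omega)]
        exact hM k j (by omega)
      have hne : k ≠ i := by intro e; subst e; omega
      have hXik : X i k = 0 := by by_contra hc; have := hX i k hc; omega
      simp [h1, hne, hXik]
    · have hu'ik : u' i k = -(X i k) := by rw [hu'.2 i k hk]; simp
      have h1 : (M * u) k j = M k j := bd_mul0 hM hu (by omega)
      have hne : k ≠ i := by intro e; subst e; omega
      rw [hu'ik, h1]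
      simp [hne]
    · rw [hu'.1 i k (by omega)]
      by_cases hki : k = i
      · subst hki
        rw [bd_mul1 hM hu h]
        have hXkk : X k k = 0 := by by_contra hc; have := hX k k hc; omega
        simp [hXkk]
      · have hXik : X i k = 0 := by by_contra hc; have := hX i k hc; omega
        simp [Ne.symm hki, hki, hXik]
  rw [Finset.sum_congr rfl fun k _ => key k, Finset.sum_sub_distrib]
  rw [Matrix.mul_apply (M := X) (N := M)]
  simp


lemma pblock_conj {a b B : Mat n} (ha : ∀ i j, d i ≠ d j → a i j = 0)
    (hb : ∀ i j, d i ≠ d j → b i j = 0)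
    (hB : ∀ i j, d i < d j → B i j = 0) :
    ∀ i j, d i < d j → (a * B * b) i j = 0 := by
  intro i j hij
  rw [Matrix.mul_apply]
  refine Finset.sum_eq_zero fun m _ => ?_
  by_cases hmj : d m = d j
  · have h0 : (a * B) i m = 0 := by
      rw [Matrix.mul_apply]
      refine Finset.sum_eq_zero fun k _ => ?_
      by_cases hik : d i = d k
      · rw [hB k m (by omega), mul_zero]
      · rw [ha i k hik, zero_mul]
    rw [h0, zero_mul]
  · rw [hb m j hmj, mul_zero]


end Stmt19Aux

open Stmt19Aux

/-- `Z_L(x) = Z_L(ε(x))`: a block-diagonal invertible matrix `l` stabilizes the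
translated parabolic `ε(x) = exp(x_1)⋯exp(x_ℓ) · p` (under conjugation) if and
only if it centralizes `x = x_1 + ⋯ + x_ℓ ∈ g(-1)`. -/
theorem stmt19 (n ℓ : ℕ) (d : Fin n → ℤ) (hd : Antitone d)
    (x : ℕ → Matrix (Fin n) (Fin n) ℂ)
    (hx : ∀ j i i', x j i i' ≠ 0 → d i - d i' = -1)
    (hsq : ∀ j, x j * x j = 0)
    (hcol1 : ∀ j, ∀ i i' m m', x j i i' ≠ 0 → x j m m' ≠ 0 → d i' = d m')
    (hcols : ∀ j j', j ≠ j' →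
      ∀ i i' m m', x j i i' ≠ 0 → x j' m m' ≠ 0 → d i' ≠ d m')
    (u u' : Matrix (Fin n) (Fin n) ℂ)
    (hu : u = ((List.range ℓ).map fun j => (1 : Matrix (Fin n) (Fin n) ℂ) + x j).prod)
    (huu : u * u' = 1 ∧ u' * u = 1)
    (l l' : Matrix (Fin n) (Fin n) ℂ)
    (hblock : ∀ i j, d i ≠ d j → l i j = 0)
    (hl : l * l' = 1 ∧ l' * l = 1)
    (P : Set (Matrix (Fin n) (Fin n) ℂ))
    (hP : P = {B : Matrix (Fin n) (Fin n) ℂ | ∀ i j, d i < d j → B i j = 0}) :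
    (∀ A : Matrix (Fin n) (Fin n) ℂ,
        (∃ B ∈ P, A = u * B * u') ↔ (∃ B ∈ P, l * A * l' = u * B * u')) ↔
      l * (∑ j ∈ Finset.range ℓ, x j) = (∑ j ∈ Finset.range ℓ, x j) * l := by
  set X : Matrix (Fin n) (Fin n) ℂ := ∑ j ∈ Finset.range ℓ, x j with hXdef
  -- basic facts
  have hXdeg : ∀ i k, X i k ≠ 0 → d i - d k = -1 := by
    intro i k hik
    by_contra hc
    apply hik
    rw [hXdef, Matrix.sum_apply]
    exact Finset.sum_eq_zero fun j _ => by
      by_contra hz; exact hc (hx j i k hz)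
  have hUu : UP d X u := by rw [hu, hXdef]; exact up_prod hx ℓ
  set v : Matrix (Fin n) (Fin n) ℂ :=
    ((List.range ℓ).reverse.map fun j => (1 : Matrix (Fin n) (Fin n) ℂ) - x j).prod with hvdef
  have huv : u * v = 1 := by rw [hu, hvdef]; exact prod_mul_prod_rev hsq ℓ
  have hu'v : u' = v := by
    calc u' = u' * (u * v) := by rw [huv, mul_one]
      _ = (u' * u) * v := by rw [mul_assoc]
      _ = v := by rw [huu.2, one_mul]
  have hUu' : UP d (-X) u' := by rw [hu'v, hvdef, hXdef]; exact up_prod_rev hx ℓ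
  -- l' is block diagonal
  have hblock' : ∀ i j, d i ≠ d j → l' i j = 0 := by
    intro i j hij
    set D : Matrix (Fin n) (Fin n) ℂ :=
      Matrix.diagonal (fun k => if d k = d j then (1:ℂ) else 0) with hD
    have hcommD : l * D = D * l := by
      ext a b
      rw [Matrix.mul_diagonal, Matrix.diagonal_mul]
      by_cases hab : d a = d b
      · rw [hab, mul_comm]
      · rw [hblock a b hab, zero_mul, mul_zero]
    have h2 : l' * D = D * l' := by
      calc l' * D = l' * D * (l * l') := by rw [hl.1, mul_one]
        _ = l' * (D * l) * l' := by noncomm_ring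
        _ = l' * (l * D) * l' := by rw [hcommD]
        _ = (l' * l) * D * l' := by noncomm_ring
        _ = D * l' := by rw [hl.2, one_mul]
    have h3 : (l' * D) i j = (D * l') i j := by rw [h2]
    rw [Matrix.mul_diagonal, Matrix.diagonal_mul] at h3
    simpa [hij] using h3
  constructor
  · -- stabilizer → commute
    intro H
    ext i j
    by_cases hdeg : d i - d j = -1
    · -- use the stabilizer condition with e_{jj}
      obtain ⟨q, hq⟩ : ∃ q, l' j q ≠ 0 := by
        by_contra hq
        push_neg at hq
        have h0 : (l' * l) j j = 0 := by
          rw [Matrix.mul_apply]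
          exact Finset.sum_eq_zero fun k _ => by rw [hq k, zero_mul]
        rw [hl.2] at h0
        simp [Matrix.one_apply] at h0
      have hdq : d j = d q := by
        by_contra hc; exact hq (hblock' j q hc)
      set e : Matrix (Fin n) (Fin n) ℂ := Matrix.single j j (1:ℂ) with hedef
      have heP : e ∈ P := by
        rw [hP]
        intro a b hab
        simp only [hedef, Matrix.single, Matrix.of_apply]
        split
        · rename_i hcond; exfalso; obtain ⟨h1, h2⟩ := hcond; subst h1; subst h2; omega
        · rfl
      obtain ⟨B', hB', heq⟩ := (H (u * e * u')).1 ⟨e, heP, rfl⟩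
      have hB'eq : B' = (u' * l * u) * e * (u' * l' * u) := by
        calc B' = (u' * u) * B' * (u' * u) := by rw [huu.2, one_mul, mul_one]
          _ = u' * (u * B' * u') * u := by noncomm_ring
          _ = u' * (l * (u * e * u') * l') * u := by rw [heq]
          _ = (u' * l * u) * e * (u' * l' * u) := by noncomm_ring
      have hentry : B' i q = (u' * l * u) i j * (u' * l' * u) j q := by
        rw [hB'eq, Matrix.mul_apply]
        have h1 : ∀ m, ((u' * l * u) * e) i m * (u' * l' * u) m q
            = if m = j then (u' * l * u) i j * (u' * l' * u) j q else 0 := by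
          intro m
          by_cases hm : m = j
          · subst hm
            rw [hedef, Matrix.mul_single_apply_same, mul_one]
            simp
          · rw [hedef, Matrix.mul_single_apply_of_ne _ _ _ i m hm, zero_mul]
            simp [hm]
        rw [Finset.sum_congr rfl fun m _ => h1 m]
        simp
      have hzero : B' i q = 0 := by
        rw [hP] at hB'
        exact hB' i q (by omega)
      have hg : (u' * l * u) i j = (l * X) i j - (X * l) i j := by
        rw [mul_assoc]
        exact sandwich1 hblock hUu hUu' hXdeg hdeg
      have hg' : (u' * l' * u) j q = l' j q := by
        rw [mul_assoc]
        exact sandwich0 hblock' hUu hUu'.1 (by omega)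
      rw [hentry, hg, hg'] at hzero
      rcases mul_eq_zero.mp hzero with h0 | h0
      · exact sub_eq_zero.mp h0
      · exact absurd h0 hq
    · -- degree ≠ -1 : both entries vanish
      have h1 : (l * X) i j = 0 := by
        rw [Matrix.mul_apply]
        refine Finset.sum_eq_zero fun k _ => ?_
        by_cases hik : d i = d k
        · have : X k j = 0 := by
            by_contra hc; have := hXdeg k j hc; omega
          rw [this, mul_zero]
        · rw [hblock i k hik, zero_mul]
      have h2 : (X * l) i j = 0 := by
        rw [Matrix.mul_apply]
        refine Finset.sum_eq_zero fun k _ => ?_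
        by_cases hkj : d k = d j
        · have : X i k = 0 := by
            by_contra hc; have := hXdeg i k hc; omega
          rw [this, zero_mul]
        · rw [hblock k j hkj, mul_zero]
      rw [h1, h2]
  · -- commute → stabilizer
    intro hcomm
    -- l commutes with each x j
    have hcommj : ∀ j ∈ Finset.range ℓ, l * x j = x j * l := by
      intro j hj
      by_cases hz : x j = 0
      · rw [hz, mul_zero, zero_mul]
      · obtain ⟨i0, i0', hx0⟩ : ∃ i0 i0', x j i0 i0' ≠ 0 := by
          by_contra hc
          push_neg at hc
          exact hz (by ext a b; simpa using hc a b)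
        ext p q
        by_cases hq : d q = d i0'
        · have hlj : (l * X) p q = (l * x j) p q := by
            rw [hXdef, Finset.mul_sum, Matrix.sum_apply]
            refine Finset.sum_eq_single_of_mem j hj fun k hk hkj => ?_
            rw [Matrix.mul_apply]
            refine Finset.sum_eq_zero fun m _ => ?_
            by_cases hxz : x k m q = 0
            · rw [hxz, mul_zero]
            · exact absurd (hq) (by
                have := hcols k j hkj m q i0 i0' hxz hx0
                exact fun h => this (by omega))
          have hjl : (X * l) p q = (x j * l) p q := by
            rw [hXdef, Finset.sum_mul, Matrix.sum_apply]
            refine Finset.sum_eq_single_of_mem j hj fun k hk hkj => ?_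
            rw [Matrix.mul_apply]
            refine Finset.sum_eq_zero fun m _ => ?_
            by_cases hxz : x k p m = 0
            · rw [hxz, zero_mul]
            · by_cases hlz : l m q = 0
              · rw [hlz, mul_zero]
              · exfalso
                have h5 : d m = d q := by
                  by_contra hc; exact hlz (hblock m q hc)
                have := hcols k j hkj p m i0 i0' hxz hx0
                omega
          calc (l * x j) p q = (l * X) p q := hlj.symm
            _ = (X * l) p q := by rw [hcomm]
            _ = (x j * l) p q := hjl
        · have h1 : (l * x j) p q = 0 := by
            rw [Matrix.mul_apply]
            refine Finset.sum_eq_zero fun m _ => ?_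
            by_cases hxz : x j m q = 0
            · rw [hxz, mul_zero]
            · exact absurd (hcol1 j m q i0 i0' hxz hx0) hq
          have h2 : (x j * l) p q = 0 := by
            rw [Matrix.mul_apply]
            refine Finset.sum_eq_zero fun m _ => ?_
            by_cases hxz : x j p m = 0
            · rw [hxz, zero_mul]
            · by_cases hlz : l m q = 0
              · rw [hlz, mul_zero]
              · exfalso
                have h5 : d m = d q := by
                  by_contra hc; exact hlz (hblock m q hc)
                have := hcol1 j p m i0 i0' hxz hx0
                omega
          rw [h1, h2]
    have hCu : l * u = u * l := by
      rw [hu]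
      refine (Commute.list_prod_right _ l fun y hy => ?_).eq
      obtain ⟨j, hj, rfl⟩ := List.mem_map.mp hy
      have hj' : j ∈ Finset.range ℓ := Finset.mem_range.mpr (List.mem_range.mp hj)
      exact (Commute.one_right l).add_right (hcommj j hj')
    have hC2 : l * u' = u' * l := by
      calc l * u' = (u' * u) * l * u' := by rw [huu.2, one_mul]
        _ = u' * (u * l) * u' := by noncomm_ring
        _ = u' * (l * u) * u' := by rw [hCu]
        _ = u' * l * (u * u') := by noncomm_ring
        _ = u' * l := by rw [huu.1, mul_one]
    have hC3 : l' * u = u * l' := by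
      calc l' * u = l' * u * (l * l') := by rw [hl.1, mul_one]
        _ = l' * (u * l) * l' := by noncomm_ring
        _ = l' * (l * u) * l' := by rw [hCu]
        _ = (l' * l) * u * l' := by noncomm_ring
        _ = u * l' := by rw [hl.2, one_mul]
    have hC4 : u' * l' = l' * u' := by
      calc u' * l' = (u' * l') * (u * u') := by rw [huu.1, mul_one]
        _ = u' * (l' * u) * u' := by noncomm_ring
        _ = u' * (u * l') * u' := by rw [hC3]
        _ = (u' * u) * l' * u' := by noncomm_ring
        _ = l' * u' := by rw [huu.2, one_mul]
    intro A
    constructor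
    · rintro ⟨B, hB, rfl⟩
      refine ⟨l * B * l', ?_, ?_⟩
      · rw [hP] at hB ⊢
        exact fun i j hij => pblock_conj hblock hblock' hB i j hij
      · calc l * (u * B * u') * l' = (l * u) * B * (u' * l') := by noncomm_ring
          _ = (u * l) * B * (l' * u') := by rw [hCu, hC4]
          _ = u * (l * B * l') * u' := by noncomm_ring
    · rintro ⟨B, hB, hEq⟩
      refine ⟨l' * B * l, ?_, ?_⟩
      · rw [hP] at hB ⊢
        exact fun i j hij => pblock_conj hblock' hblock hB i j hij
      · calc A = (l' * l) * A * (l' * l) := by rw [hl.2, one_mul, mul_one]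
          _ = l' * (l * A * l') * l := by noncomm_ring
          _ = l' * (u * B * u') * l := by rw [hEq]
          _ = (l' * u) * B * (u' * l) := by noncomm_ring
          _ = (u * l') * B * (l * u') := by rw [hC3, ← hC2]
          _ = u * (l' * B * l) * u' := by noncomm_ring
end
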